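/- In the space φ of finitely supported real sequences with the box-type topology (base at 0: sets {f : |f(n)| < ε_n for all n} with ε_n > 0), define U_{n,k} = {f ∈ φ : |f(1)| > 1/(2n) and |f(n)| > 1/(2k)} and U = ⋃_{n,k∈ℕ} U_{n,k}. Then 0 belongs to the closure of U but no sequence contained in U converges to 0. -/

import Mathlib

open Filter Topology

/-- The box topology on `ℕ → ℝ`, generated by all boxes `∏ₙ oₙ` with each `oₙ` open. -/
def boxTopology : TopologicalSpace (ℕ → ℝ) :=
  TopologicalSpace.generateFrom
    {S | ∃ o : ℕ → Set ℝ, (∀ n, IsOpen (o n)) ∧ S = Set.pi Set.univ o}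

/-- The space `φ` of finitely supported real sequences, with the topology induced by the
box topology; its neighborhood base at `0` consists of the sets
`{f ∈ φ : |f n| < ε n for all n}` with `ε n > 0`. -/
def Phi : Type := {f : ℕ → ℝ // (Function.support f).Finite}

instance : TopologicalSpace Phi := boxTopology.induced Subtype.val

instance : Zero Phi := ⟨⟨0, by simp⟩⟩

/-- The set `Uₙₖ = {f ∈ φ : |f 1| > 1/(2n) and |f n| > 1/(2k)}` for `n, k ≥ 1`. -/
def Unk (n k : ℕ) : Set Phi :=
  {f : Phi | |f.1 1| > 1 / (2 * (n : ℝ)) ∧ |f.1 n| > 1 / (2 * (k : ℝ))}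

lemma boxes_basis : @TopologicalSpace.IsTopologicalBasis (ℕ → ℝ) boxTopology
    {S | ∃ o : ℕ → Set ℝ, (∀ n, IsOpen (o n)) ∧ S = Set.pi Set.univ o} := by
  have h := @TopologicalSpace.isTopologicalBasis_of_subbasis (ℕ → ℝ) boxTopology _ rfl
  convert h using 1
  ext S
  constructor
  · rintro ⟨o, ho, rfl⟩
    exact ⟨{Set.pi Set.univ o}, ⟨Set.finite_singleton _, by simpa using ⟨o, ho, rfl⟩⟩, by simp⟩
  · rintro ⟨F, ⟨hFfin, hFsub⟩, rfl⟩
    haveI := hFfin.to_subtype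
    choose o ho hSo using fun S : F => hFsub S.2
    refine ⟨fun n => ⋂ S : F, o S n, fun n => isOpen_iInter_of_finite fun S => ho S n, ?_⟩
    ext f
    simp only [Set.mem_sInter, Set.mem_pi, Set.mem_univ, Set.mem_iInter, forall_true_left]
    constructor
    · intro h n S
      have := h (S : Set (ℕ → ℝ)) S.2
      rw [hSo S] at this
      exact this n (Set.mem_univ n)
    · intro h T hT
      rw [show T = Set.pi Set.univ (o ⟨T, hT⟩) from hSo ⟨T, hT⟩]
      exact fun n _ => h n ⟨T, hT⟩

lemma phi_nhds (x : Phi) :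
    𝓝 x = Filter.comap Subtype.val (@nhds _ boxTopology x.1) :=
  @nhds_induced _ _ boxTopology Subtype.val x

/-- A box around 0 pulls back to a neighborhood of 0 in Phi. -/
lemma box_mem_nhds (o : ℕ → Set ℝ) (ho : ∀ n, IsOpen (o n)) (h0 : ∀ n, (0:ℝ) ∈ o n) :
    (Subtype.val ⁻¹' Set.pi Set.univ o : Set Phi) ∈ 𝓝 (0 : Phi) := by
  letI : TopologicalSpace (ℕ → ℝ) := boxTopology
  rw [phi_nhds]
  refine Filter.preimage_mem_comap ?_
  have hopen : IsOpen (Set.pi Set.univ o) :=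
    TopologicalSpace.GenerateOpen.basic _ ⟨o, ho, rfl⟩
  exact hopen.mem_nhds (fun n _ => h0 n)

/-- Every neighborhood of 0 in Phi contains the trace of a box. -/
lemma nhds_zero_basis {t : Set Phi} (ht : t ∈ 𝓝 (0 : Phi)) :
    ∃ o : ℕ → Set ℝ, (∀ n, IsOpen (o n)) ∧ (∀ n, (0:ℝ) ∈ o n) ∧
      (Subtype.val ⁻¹' Set.pi Set.univ o : Set Phi) ⊆ t := by
  letI : TopologicalSpace (ℕ → ℝ) := boxTopology
  rw [phi_nhds] at ht
  obtain ⟨V, hV, hVt⟩ := ht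
  rw [boxes_basis.mem_nhds_iff] at hV
  obtain ⟨S, ⟨o, ho, rfl⟩, h0S, hSV⟩ := hV
  exact ⟨o, ho, fun n => h0S n (Set.mem_univ n), fun f hf => hVt (hSV hf)⟩

theorem stmt8 :
    (0 : Phi) ∈ closure (⋃ n ≥ 1, ⋃ k ≥ 1, Unk n k) ∧
      ∀ u : ℕ → Phi, (∀ j, u j ∈ ⋃ n ≥ 1, ⋃ k ≥ 1, Unk n k) →
        ¬ Tendsto u atTop (𝓝 (0 : Phi)) := by
  constructor
  · -- 0 is in the closure
    rw [mem_closure_iff_nhds]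
    intro t ht
    obtain ⟨o, ho, h0, hsub⟩ := nhds_zero_basis ht
    obtain ⟨ε1, hε1, hball1⟩ := Metric.isOpen_iff.1 (ho 1) 0 (h0 1)
    obtain ⟨n0, hn0⟩ := exists_nat_one_div_lt (half_pos hε1)
    set n : ℕ := max (n0 + 1) 2 with hn
    have hn2 : 2 ≤ n := le_max_right _ _
    have hn1lt : 1 / (2 * (n:ℝ)) < ε1 / 2 := by
      have h1n : ((n0:ℝ) + 1) ≤ 2 * (n:ℝ) := by
        have h1 : (n0 + 1 : ℕ) ≤ n := le_max_left _ _
        have h2 : ((n0:ℝ) + 1) ≤ (n:ℝ) := by exact_mod_cast h1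
        have : (0:ℝ) ≤ (n:ℝ) := by positivity
        linarith
      calc 1 / (2 * (n:ℝ)) ≤ 1 / ((n0:ℝ) + 1) :=
            one_div_le_one_div_of_le (by positivity) h1n
        _ < ε1 / 2 := hn0
    obtain ⟨ε2, hε2, hball2⟩ := Metric.isOpen_iff.1 (ho n) 0 (h0 n)
    obtain ⟨k0, hk0⟩ := exists_nat_one_div_lt (half_pos hε2)
    set k : ℕ := k0 + 1 with hk
    have hk1lt : 1 / (2 * (k:ℝ)) < ε2 / 2 := by
      have h1k : ((k0:ℝ) + 1) ≤ 2 * (k:ℝ) := by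
        have : ((k0:ℝ) + 1) = (k:ℝ) := by rw [hk]; push_cast; ring
        rw [this]
        have : (0:ℝ) ≤ (k:ℝ) := by positivity
        linarith
      calc 1 / (2 * (k:ℝ)) ≤ 1 / ((k0:ℝ) + 1) :=
            one_div_le_one_div_of_le (by positivity) h1k
        _ < ε2 / 2 := hk0
    set g : ℕ → ℝ := fun m => if m = 1 then ε1/2 else if m = n then ε2/2 else 0 with hg
    have hsupp : (Function.support g).Finite := by
      apply Set.Finite.subset ((Set.finite_singleton n).insert 1)
      intro m hm
      simp only [Function.mem_support, hg] at hm
      by_contra hc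
      simp only [Set.mem_insert_iff, Set.mem_singleton_iff, not_or] at hc
      simp [hc.1, hc.2] at hm
    set f : Phi := ⟨g, hsupp⟩ with hf
    have hne1 : n ≠ 1 := by omega
    have hg1 : g 1 = ε1/2 := by simp [hg]
    have hgn : g n = ε2/2 := by simp [hg, hne1]
    refine ⟨f, ?_, ?_⟩
    · apply hsub
      intro m _
      by_cases hm1 : m = 1
      · subst hm1
        apply hball1
        show g 1 ∈ Metric.ball (0:ℝ) ε1
        simp only [Metric.mem_ball, Real.dist_eq, sub_zero]
        rw [hg1, abs_of_pos (half_pos hε1)]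
        linarith
      · by_cases hmn : m = n
        · rw [hmn]
          apply hball2
          show g n ∈ Metric.ball (0:ℝ) ε2
          simp only [Metric.mem_ball, Real.dist_eq, sub_zero]
          rw [hgn, abs_of_pos (half_pos hε2)]
          linarith
        · have hz : g m = 0 := by simp [hg, hm1, hmn]
          show g m ∈ o m
          rw [hz]
          exact h0 m
    · simp only [Set.mem_iUnion]
      refine ⟨n, by omega, k, by omega, ?_, ?_⟩
      · show |g 1| > 1 / (2 * (n:ℝ))
        rw [hg1, abs_of_pos (half_pos hε1)]
        exact hn1lt
      · show |g n| > 1 / (2 * (k:ℝ))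
        rw [hgn, abs_of_pos (half_pos hε2)]
        exact hk1lt
  · -- no sequence in U converges to 0
    intro u hu htend
    have key : ∀ j, ∃ n : ℕ, 1 ≤ n ∧ ∃ k : ℕ, 1 ≤ k ∧
        |((u j).1) 1| > 1 / (2 * (n:ℝ)) ∧ |((u j).1) n| > 1 / (2 * (k:ℝ)) := by
      intro j
      have := hu j
      simp only [Set.mem_iUnion, Unk, Set.mem_setOf_eq] at this
      obtain ⟨n, hn, k, hk, h1, h2⟩ := this
      exact ⟨n, hn, k, hk, h1, h2⟩
    choose N hN K hK h1 h2 using key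
    by_cases hcase : ∃ m, {j | N j = m}.Infinite
    · obtain ⟨m, hm⟩ := hcase
      obtain ⟨j0, hj0⟩ := hm.nonempty
      have hm1 : 1 ≤ m := hj0 ▸ hN j0
      set o : ℕ → Set ℝ := fun i => if i = 1 then {x | |x| < 1/(2*(m:ℝ))} else Set.univ with ho
      have hoopen : ∀ i, IsOpen (o i) := by
        intro i
        simp only [ho]
        by_cases hi : i = 1
        · rw [if_pos hi]; exact isOpen_lt continuous_abs continuous_const
        · rw [if_neg hi]; exact isOpen_univ
      have ho0 : ∀ i, (0:ℝ) ∈ o i := by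
        intro i
        simp only [ho]
        by_cases hi : i = 1
        · rw [if_pos hi]
          simp only [Set.mem_setOf_eq, abs_zero]
          have hmR : (0:ℝ) < (m:ℝ) := by exact_mod_cast hm1
          positivity
        · rw [if_neg hi]; exact Set.mem_univ _
      have hev : ∀ᶠ j in atTop, u j ∈ (Subtype.val ⁻¹' Set.pi Set.univ o : Set Phi) :=
        htend (box_mem_nhds o hoopen ho0)
      rw [eventually_atTop] at hev
      obtain ⟨J, hJ⟩ := hev
      obtain ⟨j, hjm, hjJ⟩ := hm.exists_gt J
      have h1' : ((u j).1) 1 ∈ o 1 := (hJ j hjJ.le) 1 (Set.mem_univ 1)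
      simp only [ho, if_pos rfl, Set.mem_setOf_eq] at h1'
      have hjm' : N j = m := hjm
      have hgt := h1 j
      rw [hjm'] at hgt
      have hring : ((m:ℝ))⁻¹ * 2⁻¹ = 1/(2*(m:ℝ)) := by ring
      simp only [one_div] at h1' hgt ⊢
      linarith [hgt, h1']
    · push_neg at hcase
      have hcase : ∀ m, {j | N j = m}.Finite := hcase
      set F : ℕ → Finset ℕ := fun m => (hcase m).toFinset with hF
      set ε : ℕ → ℝ := fun m =>
        if h : (F m).Nonempty then (F m).inf' h (fun j => |((u j).1) m|) else 1 with hε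
      have hεpos : ∀ m, 0 < ε m := by
        intro m
        by_cases h : (F m).Nonempty
        · simp only [hε, dif_pos h]
          rw [Finset.lt_inf'_iff]
          intro j hj
          have hjm : N j = m := by
            have := hj
            simp only [hF, Set.Finite.mem_toFinset, Set.mem_setOf_eq] at this
            exact this
          have hKpos : (0:ℝ) < (K j : ℝ) := by
            exact_mod_cast Nat.lt_of_lt_of_le Nat.zero_lt_one (hK j)
          have hpos : (0:ℝ) < 1 / (2 * (K j:ℝ)) := by positivity
          have := h2 j
          rw [hjm] at this
          linarith
        · simp [hε, h]
      set o : ℕ → Set ℝ := fun i => {x | |x| < ε i} with ho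
      have hoopen : ∀ i, IsOpen (o i) := fun i => isOpen_lt continuous_abs continuous_const
      have ho0 : ∀ i, (0:ℝ) ∈ o i := fun i => by
        simp only [ho, Set.mem_setOf_eq, abs_zero]; exact hεpos i
      have hev : ∀ᶠ j in atTop, u j ∈ (Subtype.val ⁻¹' Set.pi Set.univ o : Set Phi) :=
        htend (box_mem_nhds o hoopen ho0)
      rw [eventually_atTop] at hev
      obtain ⟨J, hJ⟩ := hev
      have hmem : ((u J).1) (N J) ∈ o (N J) := (hJ J le_rfl) (N J) (Set.mem_univ _)
      simp only [ho, Set.mem_setOf_eq] at hmem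
      have hJF : J ∈ F (N J) := by
        simp only [hF, Set.Finite.mem_toFinset, Set.mem_setOf_eq]
      have hεle : ε (N J) ≤ |((u J).1) (N J)| := by
        have hne : (F (N J)).Nonempty := ⟨J, hJF⟩
        simp only [hε, dif_pos hne]
        exact Finset.inf'_le _ hJF
      linarith
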